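/- Let n, m be positive integers and let lb, ub : Fin m → ℤ. Let P be the set of all f : Fin n → Fin m → ℝ such that f i j ≥ 0 for all i, j; Σ_j f i j = 1 for every i; and (lb j : ℝ) ≤ Σ_i f i j ≤ (ub j : ℝ) for every j. Fix i₀ : Fin n, j₀ : Fin m, and v ∈ {0, 1}. If there exists f ∈ P with f i₀ j₀ = v, then there exists f' ∈ P with all entries in {0,1} and f' i₀ j₀ = v. -/

import Mathlib

lemma exists_int_vec {ι : Type*} (s : Finset ι) (L U : ι → ℤ) (N : ℤ)
    (hLU : ∀ j ∈ s, L j ≤ U j) (h1 : ∑ j ∈ s, L j ≤ N) (h2 : N ≤ ∑ j ∈ s, U j) :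
    ∃ c : ι → ℤ, (∀ j ∈ s, L j ≤ c j ∧ c j ≤ U j) ∧ ∑ j ∈ s, c j = N := by
  classical
  induction s using Finset.induction generalizing N with
  | empty =>
    have hN : N = 0 := le_antisymm (by simpa using h2) (by simpa using h1)
    exact ⟨0, by simp, by simp [hN]⟩
  | @insert a s' ha ih =>
    rw [Finset.sum_insert ha] at h1 h2
    have hsLU : ∑ j ∈ s', L j ≤ ∑ j ∈ s', U j :=
      Finset.sum_le_sum fun j hj => hLU j (Finset.mem_insert_of_mem hj)
    set ca := max (L a) (N - ∑ j ∈ s', U j) with hca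
    have hLa := hLU a (Finset.mem_insert_self a s')
    have hca1 : L a ≤ ca := le_max_left _ _
    have hca2 : ca ≤ U a := max_le hLa (by omega)
    have hca3 : ca ≤ N - ∑ j ∈ s', L j := max_le (by omega) (by omega)
    have hca4 : N - ∑ j ∈ s', U j ≤ ca := le_max_right _ _
    obtain ⟨c, hc, hcsum⟩ := ih (fun j hj => hLU j (Finset.mem_insert_of_mem hj)) (N := N - ca)
      (by omega) (by omega)
    refine ⟨Function.update c a ca, ?_, ?_⟩
    · intro j hj
      rcases Finset.mem_insert.1 hj with rfl | hj'
      · simp [hca1, hca2]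
      · have hne : j ≠ a := by rintro rfl; exact ha hj'
        simpa [Function.update_of_ne hne] using hc j hj'
    · rw [Finset.sum_insert ha, Function.update_self]
      have heq : ∑ j ∈ s', Function.update c a ca j = ∑ j ∈ s', c j := by
        apply Finset.sum_congr rfl
        intro j hj
        exact Function.update_of_ne (by rintro rfl; exact ha hj) _ _
      omega

lemma exists_fn_of_counts (n m : ℕ) (cn : Fin m → ℕ) (hsum : ∑ j, cn j = n) :
    ∃ a : Fin n → Fin m, ∀ j, (Finset.univ.filter fun i => a i = j).card = cn j := by
  classical
  set M : Multiset (Fin m) := ∑ j, Multiset.replicate (cn j) j with hM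
  have hcard : Multiset.card M = n := by
    rw [hM, Multiset.card_sum]
    simpa using hsum
  set l : List (Fin m) := M.toList with hl
  have hlen : l.length = n := by rw [hl, Multiset.length_toList, hcard]
  refine ⟨fun i => l.get (Fin.cast hlen.symm i), fun j => ?_⟩
  have h1 : ((Finset.univ.filter fun i : Fin n => l.get (Fin.cast hlen.symm i) = j).card : ℕ)
      = Multiset.count j (Multiset.map (fun i : Fin n => l.get (Fin.cast hlen.symm i)) Finset.univ.val) := by
    rw [Multiset.count_map, Finset.card, Finset.filter_val]
    exact congrArg Multiset.card (Multiset.filter_congr fun x _ => eq_comm)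
  rw [h1]
  have h2 : Multiset.map (fun i : Fin n => l.get (Fin.cast hlen.symm i)) Finset.univ.val
      = (l : Multiset (Fin m)) := by
    have : (Finset.univ.val : Multiset (Fin n)).map (Fin.cast hlen.symm)
        = (Finset.univ.val : Multiset (Fin l.length)) := by
      have := Finset.map_univ_equiv (finCongr hlen.symm)
      rw [← this, Finset.map_val]
      rfl
    rw [show (fun i : Fin n => l.get (Fin.cast hlen.symm i)) = l.get ∘ Fin.cast hlen.symm from rfl,
      ← Multiset.map_map, this]
    rw [Fin.univ_def]
    show Multiset.map l.get (List.finRange l.length : Multiset (Fin l.length)) = _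
    rw [Multiset.map_coe, List.map_get_finRange]
  rw [h2, hl, Multiset.coe_toList, hM]
  rw [Multiset.count_sum']
  simp [Multiset.count_replicate]

lemma filter_comp_equiv_card {α : Type*} [Fintype α] [DecidableEq α] (e : α ≃ α)
    (p : α → Prop) [DecidablePred p] :
    (Finset.univ.filter fun i => p (e i)).card = (Finset.univ.filter p).card := by
  have : (Finset.univ.filter fun i => p (e i))
      = (Finset.univ.filter p).map e.symm.toEmbedding := by
    ext x
    simp [Finset.mem_map_equiv]
  rw [this, Finset.card_map]

lemma indicator_feasible {n m : ℕ} (lb ub : Fin m → ℤ) (a : Fin n → Fin m)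
    (hlb : ∀ j, lb j ≤ ((Finset.univ.filter fun i => a i = j).card : ℤ))
    (hub : ∀ j, ((Finset.univ.filter fun i => a i = j).card : ℤ) ≤ ub j) :
    (∀ i j, (0:ℝ) ≤ if a i = j then 1 else 0) ∧
    (∀ i, ∑ j, (if a i = j then (1:ℝ) else 0) = 1) ∧
    (∀ j, (lb j : ℝ) ≤ ∑ i, (if a i = j then (1:ℝ) else 0) ∧
      ∑ i, (if a i = j then (1:ℝ) else 0) ≤ (ub j : ℝ)) := by
  classical
  have hcolv : ∀ j, ∑ i, (if a i = j then (1:ℝ) else 0)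
      = ((Finset.univ.filter fun i => a i = j).card : ℝ) := by
    intro j
    simp [Finset.sum_boole]
  refine ⟨fun i j => by split <;> norm_num, fun i => ?_, fun j => ?_⟩
  · rw [Finset.sum_ite_eq]
    simp
  · rw [hcolv j]
    constructor
    · exact_mod_cast hlb j
    · exact_mod_cast hub j

/-- If the LP relaxation of the `bin_counts` flow reformulation admits a
solution with `f i₀ j₀ = v` for `v ∈ {0, 1}`, then it admits a 0–1 solution
with `f' i₀ j₀ = v`. -/
theorem bin_counts_lp_flow_filtering_correct
    (n m : ℕ) (hn : 0 < n) (hm : 0 < m) (lb ub : Fin m → ℤ)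
    (P : Set (Fin n → Fin m → ℝ))
    (hP : P = {f | (∀ i j, 0 ≤ f i j) ∧ (∀ i, ∑ j, f i j = 1) ∧
      (∀ j, (lb j : ℝ) ≤ ∑ i, f i j ∧ ∑ i, f i j ≤ (ub j : ℝ))})
    (i₀ : Fin n) (j₀ : Fin m) (v : ℝ) (hv : v = 0 ∨ v = 1)
    (hex : ∃ f ∈ P, f i₀ j₀ = v) :
    ∃ f' ∈ P, (∀ i j, f' i j = 0 ∨ f' i j = 1) ∧ f' i₀ j₀ = v := by
  classical
  obtain ⟨f, hfP, hfv⟩ := hex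
  rw [hP] at hfP
  obtain ⟨hnn, hrow, hcol⟩ := hfP
  have hle1 : ∀ i j, f i j ≤ 1 := by
    intro i j
    calc f i j ≤ ∑ j', f i j' := Finset.single_le_sum (fun j' _ => hnn i j') (Finset.mem_univ j)
    _ = 1 := hrow i
  have hcolsum_le : ∀ j, ∑ i, f i j ≤ (n : ℝ) := by
    intro j
    calc ∑ i, f i j ≤ ∑ _i : Fin n, (1 : ℝ) := Finset.sum_le_sum fun i _ => hle1 i j
    _ = n := by simp
  have hcolsum_nn : ∀ j, (0 : ℝ) ≤ ∑ i, f i j := fun j =>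
    Finset.sum_nonneg fun i _ => hnn i j
  have htotal : ∑ j, ∑ i, f i j = (n : ℝ) := by
    rw [Finset.sum_comm]
    simp [hrow]
  set L : Fin m → ℤ := fun j =>
    if j = j₀ ∧ v = 1 then max (lb j) 1 else max (lb j) 0 with hLdef
  set U : Fin m → ℤ := fun j =>
    if j = j₀ ∧ v = 0 then min (ub j) ((n : ℤ) - 1) else min (ub j) (n : ℤ) with hUdef
  have hLval : ∀ j, L j = if j = j₀ ∧ v = 1 then max (lb j) 1 else max (lb j) 0 :=
    fun j => rfl
  have hUval : ∀ j, U j = if j = j₀ ∧ v = 0 then min (ub j) ((n : ℤ) - 1) else min (ub j) (n : ℤ) :=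
    fun j => rfl
  have hLreal : ∀ j, (L j : ℝ) ≤ ∑ i, f i j := by
    intro j
    rw [hLval j]
    by_cases h : j = j₀ ∧ v = 1
    · rw [if_pos h]
      obtain ⟨hj, hv1⟩ := h
      subst hj
      push_cast
      refine max_le (hcol j).1 ?_
      calc (1 : ℝ) = f i₀ j := by rw [hfv, hv1]
      _ ≤ ∑ i, f i j := Finset.single_le_sum (fun i _ => hnn i j) (Finset.mem_univ i₀)
    · rw [if_neg h]
      push_cast
      exact max_le (hcol j).1 (hcolsum_nn j)
  have hUreal : ∀ j, ∑ i, f i j ≤ (U j : ℝ) := by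
    intro j
    rw [hUval j]
    by_cases h : j = j₀ ∧ v = 0
    · rw [if_pos h]
      obtain ⟨hj, hv0⟩ := h
      subst hj
      push_cast
      refine le_min (hcol j).2 ?_
      have herase : ∑ i, f i j = ∑ i ∈ Finset.univ.erase i₀, f i j := by
        rw [← Finset.sum_erase_add Finset.univ _ (Finset.mem_univ i₀), hfv, hv0, add_zero]
      rw [herase]
      calc ∑ i ∈ Finset.univ.erase i₀, f i j ≤ ∑ _i ∈ Finset.univ.erase i₀, (1 : ℝ) :=
        Finset.sum_le_sum fun i _ => hle1 i j
      _ = ((Finset.univ.erase i₀).card : ℝ) := by simp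
      _ = (n : ℝ) - 1 := by
        rw [Finset.card_erase_of_mem (Finset.mem_univ i₀)]
        simp only [Finset.card_univ, Fintype.card_fin]
        have h1n : (1 : ℕ) ≤ n := hn
        push_cast [Nat.cast_sub h1n]
        ring
    · rw [if_neg h]
      push_cast
      exact le_min (hcol j).2 (hcolsum_le j)
  have hLU : ∀ j ∈ (Finset.univ : Finset (Fin m)), L j ≤ U j := by
    intro j _
    exact_mod_cast le_trans (hLreal j) (hUreal j)
  have hsumL : ∑ j, L j ≤ (n : ℤ) := by
    have : ((∑ j, L j : ℤ) : ℝ) ≤ (n : ℝ) := by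
      push_cast
      calc ∑ j, (L j : ℝ) ≤ ∑ j, ∑ i, f i j := Finset.sum_le_sum fun j _ => hLreal j
      _ = n := htotal
    exact_mod_cast this
  have hsumU : (n : ℤ) ≤ ∑ j, U j := by
    have : (n : ℝ) ≤ ((∑ j, U j : ℤ) : ℝ) := by
      push_cast
      calc (n : ℝ) = ∑ j, ∑ i, f i j := htotal.symm
      _ ≤ ∑ j, (U j : ℝ) := Finset.sum_le_sum fun j _ => hUreal j
    exact_mod_cast this
  obtain ⟨c, hc, hcsum⟩ := exists_int_vec Finset.univ L U n hLU hsumL hsumU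
  have hcL : ∀ j, L j ≤ c j := fun j => (hc j (Finset.mem_univ j)).1
  have hcU : ∀ j, c j ≤ U j := fun j => (hc j (Finset.mem_univ j)).2
  have hc0 : ∀ j, 0 ≤ c j := by
    intro j
    refine le_trans ?_ (hcL j)
    rw [hLval j]
    split
    · exact le_trans zero_le_one (le_max_right _ _)
    · exact le_max_right _ _
  set cn : Fin m → ℕ := fun j => (c j).toNat with hcn
  have hcncast : ∀ j, (cn j : ℤ) = c j := fun j => Int.toNat_of_nonneg (hc0 j)
  have hcnsum : ∑ j, cn j = n := by
    have : ((∑ j, cn j : ℕ) : ℤ) = (n : ℤ) := by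
      rw [Nat.cast_sum]
      simp only [hcncast]
      exact hcsum
    exact_mod_cast this
  obtain ⟨a, hacount⟩ := exists_fn_of_counts n m cn hcnsum
  have hlbcn : ∀ j, lb j ≤ (cn j : ℤ) := by
    intro j
    have h1 := hcL j
    have h2 := hcncast j
    have hLlb : lb j ≤ L j := by
      rw [hLval j]; split <;> exact le_max_left _ _
    omega
  have hubcn : ∀ j, (cn j : ℤ) ≤ ub j := by
    intro j
    have h1 := hcU j
    have h2 := hcncast j
    have hUub : U j ≤ ub j := by
      rw [hUval j]; split <;> exact min_le_left _ _
    omega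
  rcases hv with hv0 | hv1
  · -- v = 0 : need a' with a' i₀ ≠ j₀
    have hub' : c j₀ ≤ (n : ℤ) - 1 := by
      refine le_trans (hcU j₀) ?_
      rw [hUval j₀, if_pos ⟨rfl, hv0⟩]
      exact min_le_right _ _
    have hcnlt : cn j₀ < n := by
      have := hcncast j₀; omega
    have hex1 : ∃ i₁, a i₁ ≠ j₀ := by
      by_contra hcon
      push_neg at hcon
      have hfull : (Finset.univ.filter fun i => a i = j₀).card = n := by
        rw [Finset.filter_true_of_mem fun i _ => hcon i]
        simp
      rw [hacount j₀] at hfull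
      omega
    obtain ⟨i₁, hi₁⟩ := hex1
    set a' : Fin n → Fin m := fun i => a (Equiv.swap i₀ i₁ i) with ha'
    have ha'count : ∀ j, (Finset.univ.filter fun i => a' i = j).card = cn j := by
      intro j
      rw [ha']
      rw [filter_comp_equiv_card (Equiv.swap i₀ i₁) (fun i => a i = j)]
      exact hacount j
    obtain ⟨hf1, hf2, hf3⟩ := indicator_feasible lb ub a'
      (fun j => by rw [ha'count j]; exact hlbcn j)
      (fun j => by rw [ha'count j]; exact hubcn j)
    refine ⟨fun i j => if a' i = j then 1 else 0, ?_, ?_, ?_⟩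
    · rw [hP]; exact ⟨hf1, hf2, hf3⟩
    · intro i j; by_cases h : a' i = j <;> simp [h]
    · have heq : a' i₀ = a i₁ := by rw [ha']; simp
      show (if a' i₀ = j₀ then (1:ℝ) else 0) = v
      rw [heq, if_neg hi₁, hv0]
  · -- v = 1 : need a' with a' i₀ = j₀
    have hlb' : 1 ≤ c j₀ := by
      refine le_trans ?_ (hcL j₀)
      rw [hLval j₀, if_pos ⟨rfl, hv1⟩]
      exact le_max_right _ _
    have hcnpos : 0 < cn j₀ := by
      have := hcncast j₀; omega
    have hex1 : ∃ i₁, a i₁ = j₀ := by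
      rw [← hacount j₀] at hcnpos
      obtain ⟨i₁, hi₁mem⟩ := Finset.card_pos.mp hcnpos
      exact ⟨i₁, (Finset.mem_filter.mp hi₁mem).2⟩
    obtain ⟨i₁, hi₁⟩ := hex1
    set a' : Fin n → Fin m := fun i => a (Equiv.swap i₀ i₁ i) with ha'
    have ha'count : ∀ j, (Finset.univ.filter fun i => a' i = j).card = cn j := by
      intro j
      rw [ha']
      rw [filter_comp_equiv_card (Equiv.swap i₀ i₁) (fun i => a i = j)]
      exact hacount j
    obtain ⟨hf1, hf2, hf3⟩ := indicator_feasible lb ub a'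
      (fun j => by rw [ha'count j]; exact hlbcn j)
      (fun j => by rw [ha'count j]; exact hubcn j)
    refine ⟨fun i j => if a' i = j then 1 else 0, ?_, ?_, ?_⟩
    · rw [hP]; exact ⟨hf1, hf2, hf3⟩
    · intro i j; by_cases h : a' i = j <;> simp [h]
    · have heq : a' i₀ = a i₁ := by rw [ha']; simp
      show (if a' i₀ = j₀ then (1:ℝ) else 0) = v
      rw [heq, if_pos hi₁, hv1]
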